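/- Let n ≥ 2 and let x_1,…,x_n,y_1,…,y_{n−1} be distinct elements with {x_1,…,x_n} ∪ {y_1,…,y_{n−1}} = {1,…,2n−1}. Let u be the bijective tableau of shape (2^{n−1},1) with first column (x_1,…,x_n) (top to bottom) and second column (y_1,…,y_{n−1}), and for 1 ≤ i ≤ n let s_i be the tableau with first column (y_1,…,y_{n−1},x_i) and second column (x_1,…,x̂_i,…,x_n) (x_i omitted). Then the polytabloid identity ε_u = Σ_{i=1}^n (−1)^{n−i} ε_{s_i} holds in the permutation module M^{(2^{n−1},1)}; that is, the image under the polytabloid map of the generalized Jacobi identity holds in the Specht module S^{(2^{n−1},1)}. -/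

import Mathlib

open Finset

/-- Number of inversions of a list. -/
def invCount {α : Type*} [LinearOrder α] (l : List α) : ℕ :=
  (Finset.univ.filter
    (fun p : Fin l.length × Fin l.length => p.1 < p.2 ∧ l.get p.2 < l.get p.1)).card

/-- The sign `(-1)^(number of inversions)` of the permutation sorting a list
with pairwise distinct entries into increasing order. -/
noncomputable def invSign {α : Type*} [LinearOrder α] (l : List α) : ℂ :=
  (-1) ^ invCount l

/-- Replace the entry `a` by `b` (in place) in a list. -/
def replaceOne {α : Type*} [DecidableEq α] (l : List α) (a b : α) : List α :=
  l.map fun z => if z = a then b else z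

open scoped Classical in
/-- Dirac delta: the basis vector corresponding to an index `r`. -/
noncomputable def delta {β : Type*} (r : β) : β → ℂ := fun r' => if r' = r then 1 else 0

/-- Index for the basis of ordered column tabloids of shape `(2^m, 1^{n-m})` on
`{1, …, n+m}` (identified with `Fin (n+m)`): such a tabloid is recorded by the
set `T` of entries of its first column (the second column is the complement). -/
abbrev Col (n m : ℕ) := {T : Finset (Fin (n + m)) // T.card = n}

/-- The space `M̃` of column tabloids of shape `(2^m, 1^{n-m})`. -/
abbrev Mt (n m : ℕ) := Col n m → ℂ

lemma card_compl' {n m : ℕ} (T : Col n m) : (T.1ᶜ).card = m := by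
  rw [Finset.card_compl, T.2, Fintype.card_fin]
  omega

/-- `yel T j` is the `(j+1)`-st smallest element of the complement of `T`
(i.e. of the second column). -/
noncomputable def yel {n m : ℕ} (T : Col n m) (j : Fin m) : Fin (n + m) :=
  (T.1ᶜ).orderEmbOfFin (card_compl' T) j

lemma yel_not_mem {n m : ℕ} (T : Col n m) (j : Fin m) : yel T j ∉ T.1 :=
  Finset.mem_compl.mp (Finset.orderEmbOfFin_mem (T.1ᶜ) (card_compl' T) j)

/-- The first column obtained from `T` after exchanging `x ∈ T` with the
`(j+1)`-st smallest element of the complement. -/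
noncomputable def swapSet {n m : ℕ} (T : Col n m) (x : Fin (n + m)) (j : Fin m) :
    Finset (Fin (n + m)) :=
  insert (yel T j) (T.1.erase x)

lemma swapSet_card {n m : ℕ} (T : Col n m) {x : Fin (n + m)} (hx : x ∈ T.1) (j : Fin m) :
    (swapSet T x j).card = n := by
  have h0 : 0 < n := T.2 ▸ Finset.card_pos.mpr ⟨x, hx⟩
  rw [swapSet, Finset.card_insert_of_notMem
      (fun h => yel_not_mem T j (Finset.mem_of_mem_erase h)),
    Finset.card_erase_of_mem hx, T.2]
  omega

/-- `swap_{x,j}(T)`: the signed basis vector obtained from `T` by exchanging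
`x` (in the first column) with the `(j+1)`-st entry of the second column in
place, the sign `ε` being the product of the signs of the two permutations
re-sorting the two columns. -/
noncomputable def swapTerm {n m : ℕ} (T : Col n m) (x : {a // a ∈ T.1}) (j : Fin m) :
    Mt n m :=
  (invSign (replaceOne (T.1.sort (· ≤ ·)) x.1 (yel T j)) *
      invSign (replaceOne ((T.1ᶜ).sort (· ≤ ·)) (yel T j) x.1)) •
    delta (⟨swapSet T x.1 j, swapSet_card T x.2 j⟩ : Col n m)

/-- The operator `η` on the basis vector `v_T`. -/
noncomputable def etaBasis {n m : ℕ} (T : Col n m) : Mt n m :=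
  (m : ℂ) • delta T - ∑ j : Fin m, ∑ x ∈ T.1.attach, swapTerm T x j

/-- The operator `η : M̃ → M̃`, extended linearly from the basis. -/
noncomputable def etaFun {n m : ℕ} (f : Mt n m) : Mt n m :=
  ∑ T : Col n m, f T • etaBasis T

/-- `η` as a linear map. -/
noncomputable def etaLin (n m : ℕ) : Mt n m →ₗ[ℂ] Mt n m where
  toFun := etaFun
  map_add' f g := by
    simp [etaFun, add_smul, Finset.sum_add_distrib]
  map_smul' c f := by
    simp [etaFun, Finset.smul_sum, smul_smul]

/-- The sign picked up when re-sorting the two columns after relabelling by `σ`. -/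
noncomputable def actSign {n m : ℕ} (σ : Equiv.Perm (Fin (n + m))) (T : Col n m) : ℂ :=
  invSign ((T.1.sort (· ≤ ·)).map ⇑σ) * invSign (((T.1ᶜ).sort (· ≤ ·)).map ⇑σ)

lemma image_card {n m : ℕ} (σ : Equiv.Perm (Fin (n + m))) (T : Col n m) :
    (T.1.image ⇑σ).card = n := by
  rw [Finset.card_image_of_injective _ σ.injective, T.2]

/-- The (signed) action of `S_{n+m}` on the space of column tabloids:
`σ • v_T = sgn(sort₁) sgn(sort₂) v_{σ(T)}`, extended linearly. -/
noncomputable def act {n m : ℕ} (σ : Equiv.Perm (Fin (n + m))) (f : Mt n m) : Mt n m :=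
  ∑ T : Col n m, f T •
    (actSign σ T • delta (⟨T.1.image ⇑σ, image_card σ T⟩ : Col n m))

section SpechtSide

variable (γ : Type*) [Fintype γ] [DecidableEq γ] (p q : ℕ)

/-- A bijective Young tableau of the two-column shape with column lengths
`p` (first column) and `q` (second column), with entries in `γ`:
a bijection from the cells to the entries. -/
abbrev Tabl := (Fin p ⊕ Fin q) ≃ γ

/-- `rows` is a row tabloid of shape `(2^q, 1^{p-q})`: the first `q` rows are
unordered pairs, the remaining rows singletons, all pairwise disjoint
(together they then necessarily partition `γ`). -/
def IsRowTab (rows : Fin p → Finset γ) : Prop :=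
  (∀ i, (rows i).card = if (i : ℕ) < q then 2 else 1) ∧
  ∀ i j, i ≠ j → Disjoint (rows i) (rows j)

/-- Row tabloids of shape `(2^q, 1^{p-q})`. -/
abbrev RowTab := {rows : Fin p → Finset γ // IsRowTab γ p q rows}

/-- The permutation module `M^{(2^q,1^{p-q})}`, with basis the row tabloids. -/
abbrev MP := RowTab γ p q → ℂ

variable {γ p q}

/-- The rows of a tableau. -/
def rowsOf (t : Tabl γ p q) : Fin p → Finset γ := fun i =>
  if h : (i : ℕ) < q then {t (Sum.inl i), t (Sum.inr ⟨(i : ℕ), h⟩)}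
  else {t (Sum.inl i)}

lemma mem_rowsOf {t : Tabl γ p q} {i : Fin p} {a : γ} (ha : a ∈ rowsOf t i) :
    a = t (Sum.inl i) ∨ ∃ h : (i : ℕ) < q, a = t (Sum.inr ⟨(i : ℕ), h⟩) := by
  unfold rowsOf at ha
  split_ifs at ha with h
  · rcases Finset.mem_insert.mp ha with h1 | h1
    · exact Or.inl h1
    · exact Or.inr ⟨h, Finset.mem_singleton.mp h1⟩
  · exact Or.inl (Finset.mem_singleton.mp ha)

lemma isRowTab_rowsOf (t : Tabl γ p q) : IsRowTab γ p q (rowsOf t) := by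
  constructor
  · intro i
    by_cases h : (i : ℕ) < q
    · rw [rowsOf, dif_pos h, if_pos h]
      exact Finset.card_pair (t.injective.ne (by simp))
    · rw [rowsOf, dif_neg h, if_neg h]
      exact Finset.card_singleton _
  · intro i j hij
    rw [Finset.disjoint_left]
    intro a ha hb
    rcases mem_rowsOf ha with h1 | ⟨hi, h1⟩ <;> rcases mem_rowsOf hb with h2 | ⟨hj, h2⟩
    · exact hij (Sum.inl.inj (t.injective (h1.symm.trans h2)))
    · exact absurd (t.injective (h1.symm.trans h2)) (by simp)
    · exact absurd (t.injective (h1.symm.trans h2)) (by simp)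
    · refine hij (Fin.ext ?_)
      have h3 := Sum.inr.inj (t.injective (h1.symm.trans h2))
      simpa using congrArg Fin.val h3

/-- The row tabloid `{t}` of a tableau `t`. -/
def rowTabOf (t : Tabl γ p q) : RowTab γ p q := ⟨rowsOf t, isRowTab_rowsOf t⟩

/-- The column stabilizer `C_t` of a tableau: permutations preserving each
column setwise. -/
def colStab (t : Tabl γ p q) : Finset (Equiv.Perm γ) :=
  Finset.univ.filter fun σ =>
    (∀ i : Fin p, ∃ i' : Fin p, σ (t (Sum.inl i)) = t (Sum.inl i')) ∧
    (∀ j : Fin q, ∃ j' : Fin q, σ (t (Sum.inr j)) = t (Sum.inr j'))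

/-- The polytabloid `ε_t = ∑_{β ∈ C_t} sgn(β) {β t}`. -/
noncomputable def polytab (t : Tabl γ p q) : MP γ p q :=
  ∑ σ ∈ colStab t, ((Equiv.Perm.sign σ : ℤ) : ℂ) • delta (rowTabOf (t.trans σ))

variable (γ p q) in
/-- The Specht module `S^{(2^q,1^{p-q})}`: the span of all polytabloids. -/
noncomputable def SpechtMod : Submodule ℂ (MP γ p q) :=
  Submodule.span ℂ (Set.range (polytab (γ := γ) (p := p) (q := q)))

/-- The entrywise action of a permutation on a row tabloid. -/
def rowAct (σ : Equiv.Perm γ) (r : RowTab γ p q) : RowTab γ p q :=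
  ⟨fun i => (r.1 i).image ⇑σ, by
    obtain ⟨h1, h2⟩ := r.2
    refine ⟨fun i => ?_, fun i j hij => ?_⟩
    · rw [Finset.card_image_of_injective _ σ.injective]; exact h1 i
    · exact (Finset.disjoint_image σ.injective).mpr (h2 i j hij)⟩

/-- The entrywise `S_N`-action on the permutation module. -/
noncomputable def actP (σ : Equiv.Perm γ) (f : MP γ p q) : MP γ p q :=
  fun r => f (rowAct σ⁻¹ r)

end SpechtSide

/-- The tableau `t(T)` whose first column is `T` in increasing order and whose
second column is the complement of `T` in increasing order. -/
noncomputable def tabOf {n m : ℕ} (T : Col n m) : Tabl (Fin (n + m)) n m :=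
  Equiv.ofBijective
    (Sum.elim (fun i => T.1.orderEmbOfFin T.2 i)
      (fun j => (T.1ᶜ).orderEmbOfFin (card_compl' T) j))
    (by
      rw [Fintype.bijective_iff_injective_and_card]
      refine ⟨?_, by simp⟩
      rintro (i | i) (j | j) h <;> simp only [Sum.elim_inl, Sum.elim_inr] at h
      · exact congrArg Sum.inl ((T.1.orderEmbOfFin T.2).injective h)
      · have h1 := Finset.orderEmbOfFin_mem T.1 T.2 i
        have h2 := Finset.orderEmbOfFin_mem (T.1ᶜ) (card_compl' T) j
        rw [h] at h1
        simp only [Finset.mem_compl] at h2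
        exact absurd h1 h2
      · have h1 := Finset.orderEmbOfFin_mem T.1 T.2 j
        have h2 := Finset.orderEmbOfFin_mem (T.1ᶜ) (card_compl' T) i
        rw [← h] at h1
        simp only [Finset.mem_compl] at h2
        exact absurd h1 h2
      · exact congrArg Sum.inr (((T.1ᶜ).orderEmbOfFin (card_compl' T)).injective h))

/-- The `S_N`-equivariant map `α : M̃ → M^{(2^m,1^{n-m})}`, sending `v_T` to the
polytabloid `ε_{t(T)}` (its image is the Specht module). -/
noncomputable def alphaLin (n m : ℕ) : Mt n m →ₗ[ℂ] MP (Fin (n + m)) n m where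
  toFun f := ∑ T : Col n m, f T • polytab (tabOf T)
  map_add' f g := by simp [add_smul, Finset.sum_add_distrib]
  map_smul' c f := by simp [Finset.smul_sum, smul_smul]

/-- `φ(v_T)`, encoding the generalized Jacobi identity (for shape `(2^{n-1},1)`,
i.e. `n = m + 1`):
`φ(v_T) = v_T − ∑_{i=1}^n (−1)^{n−i} sgn(c_i) v_{Tᶜ ∪ {x_i}}` where
`x_i` is the `i`-th smallest element of `T` and `c_i` sorts `(y_1,…,y_{n−1},x_i)`. -/
noncomputable def phiBasis {n m : ℕ} (h : n = m + 1) (T : Col n m) : Mt n m :=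
  delta T - ∑ i : Fin n,
    ((-1 : ℂ) ^ (n - 1 - (i : ℕ)) *
        invSign ((T.1ᶜ).sort (· ≤ ·) ++ [T.1.orderEmbOfFin T.2 i])) •
      delta (⟨insert (T.1.orderEmbOfFin T.2 i) T.1ᶜ, by
        rw [Finset.card_insert_of_notMem (by
            simpa using Finset.orderEmbOfFin_mem T.1 T.2 i),
          card_compl']
        omega⟩ : Col n m)

/-- The map `φ : M̃ → M̃`, extended linearly; `ker φ ≅ ρ_{n,3}`. -/
noncomputable def phiFun {n m : ℕ} (h : n = m + 1) (f : Mt n m) : Mt n m :=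
  ∑ T : Col n m, f T • phiBasis h T

/-- `φ` as a linear map. -/
noncomputable def phiLin (n m : ℕ) (h : n = m + 1) : Mt n m →ₗ[ℂ] Mt n m where
  toFun := phiFun h
  map_add' f g := by simp [phiFun, add_smul, Finset.sum_add_distrib]
  map_smul' c f := by simp [phiFun, Finset.smul_sum, smul_smul]

/-! ### Auxiliary development for the Jacobi identity -/

open Equiv Equiv.Perm in
lemma trans_permCongr' {γ : Type*} {p q : ℕ} (t : Tabl γ p q)
    (e : Equiv.Perm (Fin p ⊕ Fin q)) :
    t.trans (t.permCongr e) = e.trans t := by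
  ext z
  simp [Equiv.permCongr_apply]

open Equiv Equiv.Perm in
lemma polytab_expand {γ : Type*} [Fintype γ] [DecidableEq γ] {p q : ℕ} (t : Tabl γ p q) :
    polytab t = ∑ a : Perm (Fin p), ∑ b : Perm (Fin q),
      (((sign a : ℤ) : ℂ) * ((sign b : ℤ) : ℂ)) •
        delta (rowTabOf ((Equiv.sumCongr a b).trans t)) := by
  rw [polytab, ← Fintype.sum_prod_type']
  refine (Finset.sum_bij
    (fun (ab : Perm (Fin p) × Perm (Fin q)) _ => t.permCongr (Equiv.sumCongr ab.1 ab.2))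
    ?_ ?_ ?_ ?_).symm
  · rintro ⟨a, b⟩ -
    simp only [colStab, Finset.mem_filter, Finset.mem_univ, true_and]
    constructor
    · intro i; exact ⟨a i, by simp [Equiv.permCongr_apply]⟩
    · intro j; exact ⟨b j, by simp [Equiv.permCongr_apply]⟩
  · intro ab _ ab' _ hh
    obtain ⟨a, b⟩ := ab
    obtain ⟨a', b'⟩ := ab'
    have h2 : Equiv.sumCongr a b = Equiv.sumCongr a' b' := (Equiv.permCongr t).injective hh
    have ha : a = a' := Equiv.ext fun i => by
      simpa using congrArg (fun e => e (Sum.inl i)) h2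
    have hb : b = b' := Equiv.ext fun j => by
      simpa using congrArg (fun e => e (Sum.inr j)) h2
    simp [ha, hb]
  · intro σ hσ
    rw [colStab, Finset.mem_filter] at hσ
    obtain ⟨-, h1, h2⟩ := hσ
    choose f hf using h1
    choose g hg using h2
    have hfinj : Function.Injective f := by
      intro i j hij
      have : σ (t (Sum.inl i)) = σ (t (Sum.inl j)) := by rw [hf, hf, hij]
      exact Sum.inl_injective (t.injective (σ.injective this))
    have hginj : Function.Injective g := by
      intro i j hij
      have : σ (t (Sum.inr i)) = σ (t (Sum.inr j)) := by rw [hg, hg, hij]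
      exact Sum.inr_injective (t.injective (σ.injective this))
    refine ⟨(Equiv.ofBijective f (Finite.injective_iff_bijective.mp hfinj),
             Equiv.ofBijective g (Finite.injective_iff_bijective.mp hginj)),
      Finset.mem_univ _, ?_⟩
    ext w
    obtain ⟨z, rfl⟩ := t.surjective w
    cases z with
    | inl i => simpa [Equiv.permCongr_apply] using (hf i).symm
    | inr j => simpa [Equiv.permCongr_apply] using (hg j).symm
  · rintro ⟨a, b⟩ -
    rw [trans_permCongr', Equiv.Perm.sign_permCongr, Equiv.Perm.sign_sumCongr]
    norm_cast

section KeyLemma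

open Equiv Equiv.Perm Fin

variable {γ : Type*} [Fintype γ] [DecidableEq γ] {m : ℕ}

/-- Extension of a permutation of `Fin m` to `Fin (m+1)` fixing `last m`. -/
def extP (b : Equiv.Perm (Fin m)) : Equiv.Perm (Fin (m + 1)) :=
  (finSuccEquiv' (Fin.last m)).symm.permCongr b.optionCongr

lemma extP_castSucc (b : Equiv.Perm (Fin m)) (j : Fin m) :
    extP b (Fin.castSucc j) = Fin.castSucc (b j) := by
  simp [extP, Equiv.permCongr_apply, finSuccEquiv'_last_apply_castSucc,
    finSuccEquiv'_symm_some, Fin.succAbove_last_apply]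

lemma extP_last (b : Equiv.Perm (Fin m)) : extP b (Fin.last m) = Fin.last m := by
  simp [extP, Equiv.permCongr_apply, finSuccEquiv'_at, finSuccEquiv'_symm_none]

lemma sign_extP (b : Equiv.Perm (Fin m)) : sign (extP b) = sign b := by
  rw [extP, Equiv.Perm.sign_permCongr, Equiv.optionCongr_sign]

lemma extP_injective : Function.Injective (extP (m := m)) := by
  intro b b' h
  refine Equiv.ext fun j => ?_
  have := congrArg (fun e : Equiv.Perm (Fin (m+1)) => e (Fin.castSucc j)) h
  simp only [extP_castSucc] at this
  exact Fin.castSucc_injective m this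

/-- The cycle sending `last m` to `i` and `castSucc j` to `i.succAbove j`. -/
def sigP (i : Fin (m + 1)) : Equiv.Perm (Fin (m + 1)) :=
  (Fin.cycleRange i)⁻¹ * finRotate (m + 1)

lemma sigP_castSucc (i : Fin (m + 1)) (j : Fin m) :
    sigP i (Fin.castSucc j) = i.succAbove j := by
  have h : finRotate (m + 1) (Fin.castSucc j) = j.succ := by
    rw [finRotate_succ_apply, Fin.coeSucc_eq_succ]
  rw [sigP, Equiv.Perm.mul_apply, h, ← Fin.cycleRange_succAbove i j]
  exact Equiv.symm_apply_apply _ _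

lemma sigP_last (i : Fin (m + 1)) : sigP i (Fin.last m) = i := by
  rw [sigP, Equiv.Perm.mul_apply, finRotate_succ_apply, Fin.last_add_one,
    ← Fin.cycleRange_self i]
  exact Equiv.symm_apply_apply _ _

lemma sign_sigP (i : Fin (m + 1)) : sign (sigP i) = (-1 : ℤˣ) ^ ((i : ℕ) + m) := by
  simp [sigP, map_mul, Fin.sign_cycleRange, sign_finRotate, pow_add]

/-- The equivalence `(i, b) ↦ sigP i * extP b`. -/
noncomputable def EP {m : ℕ} : Fin (m + 1) × Equiv.Perm (Fin m) ≃ Equiv.Perm (Fin (m + 1)) :=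
  Equiv.ofBijective (fun z => sigP z.1 * extP z.2) (by
    rw [Fintype.bijective_iff_injective_and_card]
    constructor
    · rintro ⟨i, b⟩ ⟨i', b'⟩ h
      have hl := congrArg (fun e : Equiv.Perm (Fin (m+1)) => e (Fin.last m)) h
      simp only [Equiv.Perm.mul_apply, extP_last, sigP_last] at hl
      subst hl
      have : extP b = extP b' := mul_left_cancel h
      rw [extP_injective this]
    · simp [Fintype.card_perm, Nat.factorial_succ])

lemma EP_castSucc (i : Fin (m + 1)) (b : Equiv.Perm (Fin m)) (j : Fin m) :
    EP (i, b) (Fin.castSucc j) = i.succAbove (b j) := by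
  show (sigP i * extP b) (Fin.castSucc j) = _
  rw [Equiv.Perm.mul_apply, extP_castSucc, sigP_castSucc]

lemma EP_last (i : Fin (m + 1)) (b : Equiv.Perm (Fin m)) :
    EP (i, b) (Fin.last m) = i := by
  show (sigP i * extP b) (Fin.last m) = _
  rw [Equiv.Perm.mul_apply, extP_last, sigP_last]

lemma sign_EP_C (i : Fin (m + 1)) (b : Equiv.Perm (Fin m)) :
    ((sign (EP (i, b)) : ℤ) : ℂ) = (-1 : ℂ) ^ (m - (i : ℕ)) * ((sign b : ℤ) : ℂ) := by
  have h1 : sign (EP (i, b)) = (-1 : ℤˣ) ^ ((i : ℕ) + m) * sign b := by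
    show sign (sigP i * extP b) = _
    rw [map_mul, sign_sigP, sign_extP]
  rw [h1]
  push_cast
  have h2 : (i : ℕ) + m = (m - (i : ℕ)) + 2 * (i : ℕ) := by
    have := Nat.lt_succ_iff.mp i.2
    omega
  rw [h2, pow_add, pow_mul]
  norm_num

end KeyLemma

section KeyLemma2

open Equiv Equiv.Perm Fin

variable {γ : Type*} [Fintype γ] [DecidableEq γ] {m : ℕ}
variable (x : Fin (m + 1) → γ) (y : Fin m → γ)

/-- Entry function for the first column of the swapped tableaux. -/
def wfun (c : Equiv.Perm (Fin (m + 1))) (k : Fin (m + 1)) : γ :=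
  if h : (k : ℕ) < m then y ⟨(k : ℕ), h⟩ else x (c (Fin.last m))

/-- Rows of the relabelled swapped tableau, parametrized by `c` and `a'`. -/
def RTrows (c a' : Equiv.Perm (Fin (m + 1))) : Fin (m + 1) → Finset γ := fun j =>
  if h : (j : ℕ) < m then
    {wfun x y c (a' j), x (c (Fin.castSucc ⟨(j : ℕ), h⟩))}
  else {wfun x y c (a' j)}

variable (s : Fin (m + 1) → Tabl γ (m + 1) m)

/-- The bundled row tabloid corresponding to `RTrows`. -/
noncomputable def RTtab (c a' : Equiv.Perm (Fin (m + 1))) : RowTab γ (m + 1) m :=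
  rowTabOf ((Equiv.sumCongr a' (EP.symm c).2).trans (s (EP.symm c).1))

variable {x y s}
variable (hs1 : ∀ i j, s i (Sum.inl j) = if h : (j : ℕ) < m then y ⟨(j : ℕ), h⟩ else x i)
  (hs2 : ∀ i j, s i (Sum.inr j) = x (Fin.succAbove i j))

include hs1 hs2 in
lemma rowsOf_s (i : Fin (m + 1)) (a' : Equiv.Perm (Fin (m + 1))) (b' : Equiv.Perm (Fin m)) :
    rowsOf ((Equiv.sumCongr a' b').trans (s i)) = RTrows x y (EP (i, b')) a' := by
  have hw : ∀ k, s i (Sum.inl k) = wfun x y (EP (i, b')) k := by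
    intro k
    rw [hs1]
    unfold wfun
    by_cases hk : (k : ℕ) < m
    · rw [dif_pos hk, dif_pos hk]
    · rw [dif_neg hk, dif_neg hk, EP_last]
  funext j
  unfold rowsOf RTrows
  have h1 : ((Equiv.sumCongr a' b').trans (s i)) (Sum.inl j)
      = wfun x y (EP (i, b')) (a' j) := by
    simp only [Equiv.trans_apply, Equiv.sumCongr_apply, Sum.map_inl]
    exact hw _
  by_cases h : (j : ℕ) < m
  · rw [dif_pos h, dif_pos h]
    have h2 : ((Equiv.sumCongr a' b').trans (s i)) (Sum.inr ⟨(j : ℕ), h⟩)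
        = x (EP (i, b') (Fin.castSucc ⟨(j : ℕ), h⟩)) := by
      simp only [Equiv.trans_apply, Equiv.sumCongr_apply, Sum.map_inr]
      rw [hs2, EP_castSucc]
    rw [h1, h2]
  · rw [dif_neg h, dif_neg h, h1]

include hs1 hs2 in
lemma RTtab_rows (c a' : Equiv.Perm (Fin (m + 1))) :
    (RTtab s c a').1 = RTrows x y c a' := by
  have hc : EP ((EP.symm c).1, (EP.symm c).2) = c := by
    rw [Prod.mk.eta]; exact EP.apply_symm_apply c
  have := rowsOf_s hs1 hs2 (EP.symm c).1 a' (EP.symm c).2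
  rw [hc] at this
  exact this

include hs1 hs2 in
lemma RTtab_eq (i : Fin (m + 1)) (a' : Equiv.Perm (Fin (m + 1))) (b' : Equiv.Perm (Fin m)) :
    rowTabOf ((Equiv.sumCongr a' b').trans (s i)) = RTtab s (EP (i, b')) a' := by
  refine Subtype.ext ?_
  rw [RTtab_rows hs1 hs2]
  exact rowsOf_s hs1 hs2 i a' b'

include hs1 hs2 in
lemma RTtab_swap (c a' : Equiv.Perm (Fin (m + 1))) (h0 : a' (Fin.last m) ≠ Fin.last m)
    (j0 : Fin (m + 1)) (hj0 : a' j0 = Fin.last m) :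
    RTtab s (c * Equiv.swap j0 (Fin.last m)) a' = RTtab s c a' := by
  refine Subtype.ext ?_
  rw [RTtab_rows hs1 hs2, RTtab_rows hs1 hs2]
  have hj0ne : j0 ≠ Fin.last m := fun h => h0 (h ▸ hj0)
  have hj0m : (j0 : ℕ) < m := Fin.val_lt_last hj0ne
  have hclast : (c * Equiv.swap j0 (Fin.last m)) (Fin.last m) = c j0 := by
    rw [Equiv.Perm.mul_apply, Equiv.swap_apply_right]
  funext j
  unfold RTrows wfun
  by_cases hj : (j : ℕ) < m
  · rw [dif_pos hj, dif_pos hj]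
    have hcs : Fin.castSucc (⟨(j : ℕ), hj⟩ : Fin m) = j := by ext; simp
    have hjlast : j ≠ Fin.last m := fun h => by rw [h] at hj; simp at hj
    by_cases hjj : j = j0
    · subst hjj
      rw [hj0, dif_neg (by simp), dif_neg (by simp), hclast, hcs]
      have hcj : (c * Equiv.swap j (Fin.last m)) j = c (Fin.last m) := by
        rw [Equiv.Perm.mul_apply, Equiv.swap_apply_left]
      rw [hcj, Finset.pair_comm]
    · have haj : a' j ≠ Fin.last m := fun h => hjj (by
        rw [← hj0] at h
        exact a'.injective h)
      have hajm : ((a' j : Fin (m + 1)) : ℕ) < m := Fin.val_lt_last haj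
      rw [dif_pos hajm, dif_pos hajm, hcs]
      have hcj : (c * Equiv.swap j0 (Fin.last m)) j = c j := by
        rw [Equiv.Perm.mul_apply, Equiv.swap_apply_of_ne_of_ne hjj hjlast]
      rw [hcj]
  · rw [dif_neg hj, dif_neg hj]
    have hjl : j = Fin.last m := Fin.ext (by
      have := j.isLt; simp only [Fin.val_last]; omega)
    subst hjl
    have hajm := Fin.val_lt_last h0
    rw [dif_pos hajm, dif_pos hajm]

include hs1 hs2 in
lemma RTtab_ext {u : Tabl γ (m + 1) m} (hu : ∀ z, u z = Sum.elim x y z)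
    (c : Equiv.Perm (Fin (m + 1))) (b : Equiv.Perm (Fin m)) :
    RTtab s c (extP b) = rowTabOf ((Equiv.sumCongr c b).trans u) := by
  refine Subtype.ext ?_
  rw [RTtab_rows hs1 hs2]
  show RTrows x y c (extP b) = rowsOf _
  funext j
  unfold RTrows wfun rowsOf
  by_cases hj : (j : ℕ) < m
  · rw [dif_pos hj, dif_pos hj]
    have hjeq : Fin.castSucc (⟨(j : ℕ), hj⟩ : Fin m) = j := by ext; simp
    have he : extP b j = Fin.castSucc (b ⟨(j : ℕ), hj⟩) := by
      conv_lhs => rw [← hjeq]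
      rw [extP_castSucc]
    have hbm : ((Fin.castSucc (b ⟨(j : ℕ), hj⟩) : Fin (m + 1)) : ℕ) < m := by
      simp [(b _).isLt]
    rw [he, dif_pos hbm]
    have h1 : ((Equiv.sumCongr c b).trans u) (Sum.inl j) = x (c j) := by
      simp only [Equiv.trans_apply, Equiv.sumCongr_apply, Sum.map_inl, hu, Sum.elim_inl]
    have h2 : ((Equiv.sumCongr c b).trans u) (Sum.inr ⟨(j : ℕ), hj⟩) = y (b ⟨(j : ℕ), hj⟩) := by
      simp only [Equiv.trans_apply, Equiv.sumCongr_apply, Sum.map_inr, hu, Sum.elim_inr]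
    have hy : y ⟨((Fin.castSucc (b ⟨(j : ℕ), hj⟩) : Fin (m + 1)) : ℕ), hbm⟩
        = y (b ⟨(j : ℕ), hj⟩) := congrArg y (Fin.ext (by simp))
    rw [h1, h2, hjeq, hy, Finset.pair_comm]
  · rw [dif_neg hj, dif_neg hj]
    have hjl : j = Fin.last m := Fin.ext (by
      have := j.isLt; simp only [Fin.val_last]; omega)
    subst hjl
    rw [extP_last, dif_neg (by simp)]
    have h1 : ((Equiv.sumCongr c b).trans u) (Sum.inl (Fin.last m)) = x (c (Fin.last m)) := by
      simp only [Equiv.trans_apply, Equiv.sumCongr_apply, Sum.map_inl, hu, Sum.elim_inl]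
    rw [h1]

end KeyLemma2

set_option maxHeartbeats 2000000 in
open Equiv Equiv.Perm in
lemma key_identity {γ : Type*} [Fintype γ] [DecidableEq γ] {m : ℕ}
    (x : Fin (m + 1) → γ) (y : Fin m → γ)
    (u : Tabl γ (m + 1) m) (hu : ∀ z, u z = Sum.elim x y z)
    (s : Fin (m + 1) → Tabl γ (m + 1) m)
    (hs1 : ∀ i j, s i (Sum.inl j) = if h : (j : ℕ) < m then y ⟨(j : ℕ), h⟩ else x i)
    (hs2 : ∀ i j, s i (Sum.inr j) = x (Fin.succAbove i j)) :
    polytab u = ∑ i : Fin (m + 1), (-1 : ℂ) ^ (m - (i : ℕ)) • polytab (s i) := by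
  symm
  have step1 : ∀ i : Fin (m + 1), (-1 : ℂ) ^ (m - (i : ℕ)) • polytab (s i)
      = ∑ b' : Equiv.Perm (Fin m), ∑ a' : Equiv.Perm (Fin (m + 1)),
          (((sign a' : ℤ) : ℂ) * ((sign (EP (i, b')) : ℤ) : ℂ)) •
            delta (RTtab s (EP (i, b')) a') := by
    intro i
    rw [polytab_expand (s i), Finset.smul_sum]
    simp only [Finset.smul_sum]
    rw [Finset.sum_comm]
    refine Finset.sum_congr rfl fun b' _ => Finset.sum_congr rfl fun a' _ => ?_
    rw [RTtab_eq hs1 hs2 i a' b', smul_smul, sign_EP_C]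
    congr 1
    ring
  have inner_zero : ∀ a' : Equiv.Perm (Fin (m + 1)), a' (Fin.last m) ≠ Fin.last m →
      ∑ c : Equiv.Perm (Fin (m + 1)),
        (((sign a' : ℤ) : ℂ) * ((sign c : ℤ) : ℂ)) • delta (RTtab s c a') = 0 := by
    intro a' h0
    have hj0 : a' (a'.symm (Fin.last m)) = Fin.last m := a'.apply_symm_apply _
    have hne : a'.symm (Fin.last m) ≠ Fin.last m := fun h =>
      h0 ((a'.symm_apply_eq.mp h).symm)
    refine Finset.sum_ninvolution
      (fun c => c * Equiv.swap (a'.symm (Fin.last m)) (Fin.last m)) ?_ ?_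
      (fun _ => Finset.mem_univ _) ?_
    · intro c
      show (((sign a' : ℤ) : ℂ) * ((sign c : ℤ) : ℂ)) • delta (RTtab s c a')
          + (((sign a' : ℤ) : ℂ) *
              ((sign (c * Equiv.swap (a'.symm (Fin.last m)) (Fin.last m)) : ℤ) : ℂ)) •
            delta (RTtab s (c * Equiv.swap (a'.symm (Fin.last m)) (Fin.last m)) a') = 0
      rw [RTtab_swap hs1 hs2 c a' h0 _ hj0]
      have hsw : sign (c * Equiv.swap (a'.symm (Fin.last m)) (Fin.last m)) = - sign c := by
        rw [map_mul, Equiv.Perm.sign_swap hne, mul_neg_one]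
      rw [← add_smul, hsw]
      have hco : ((sign a' : ℤ) : ℂ) * ((sign c : ℤ) : ℂ)
          + ((sign a' : ℤ) : ℂ) * (((- sign c : ℤˣ) : ℤ) : ℂ) = 0 := by
        push_cast
        ring
      rw [hco, zero_smul]
    · intro c _ hgc
      have hsw : Equiv.swap (a'.symm (Fin.last m)) (Fin.last m) = 1 :=
        mul_left_cancel (a := c) (by rw [mul_one]; exact hgc)
      have h2 := congrArg (fun e : Equiv.Perm (Fin (m + 1)) => e (a'.symm (Fin.last m))) hsw
      simp only [Equiv.swap_apply_left, Equiv.Perm.one_apply] at h2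
      exact hne h2.symm
    · intro c
      simp only [mul_assoc, Equiv.swap_mul_self, mul_one]
  have hfilter : ∀ a' ∈ Finset.univ.filter
        (fun a' : Equiv.Perm (Fin (m + 1)) => a' (Fin.last m) = Fin.last m),
      (∑ c : Equiv.Perm (Fin (m + 1)),
        (((sign a' : ℤ) : ℂ) * ((sign c : ℤ) : ℂ)) • delta (RTtab s c a')) =
      (∑ c : Equiv.Perm (Fin (m + 1)),
        (((sign a' : ℤ) : ℂ) * ((sign c : ℤ) : ℂ)) • delta (RTtab s c a')) := fun _ _ => rfl
  calc
    ∑ i : Fin (m + 1), (-1 : ℂ) ^ (m - (i : ℕ)) • polytab (s i)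
        = ∑ i : Fin (m + 1), ∑ b' : Equiv.Perm (Fin m), ∑ a' : Equiv.Perm (Fin (m + 1)),
            (((sign a' : ℤ) : ℂ) * ((sign (EP (i, b')) : ℤ) : ℂ)) •
              delta (RTtab s (EP (i, b')) a') :=
      Finset.sum_congr rfl fun i _ => step1 i
    _ = ∑ z : Fin (m + 1) × Equiv.Perm (Fin m), ∑ a' : Equiv.Perm (Fin (m + 1)),
            (((sign a' : ℤ) : ℂ) * ((sign (EP z) : ℤ) : ℂ)) •
              delta (RTtab s (EP z) a') :=
      (Fintype.sum_prod_type (f := fun z : Fin (m + 1) × Equiv.Perm (Fin m) =>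
        ∑ a' : Equiv.Perm (Fin (m + 1)),
          (((sign a' : ℤ) : ℂ) * ((sign (EP z) : ℤ) : ℂ)) •
            delta (RTtab s (EP z) a'))).symm
    _ = ∑ a' : Equiv.Perm (Fin (m + 1)), ∑ z : Fin (m + 1) × Equiv.Perm (Fin m),
            (((sign a' : ℤ) : ℂ) * ((sign (EP z) : ℤ) : ℂ)) •
              delta (RTtab s (EP z) a') := Finset.sum_comm
    _ = ∑ a' : Equiv.Perm (Fin (m + 1)), ∑ c : Equiv.Perm (Fin (m + 1)),
            (((sign a' : ℤ) : ℂ) * ((sign c : ℤ) : ℂ)) • delta (RTtab s c a') :=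
      Finset.sum_congr rfl fun a' _ => EP.sum_comp
        (fun c => (((sign a' : ℤ) : ℂ) * ((sign c : ℤ) : ℂ)) • delta (RTtab s c a'))
    _ = (∑ a' ∈ Finset.univ.filter
            (fun a' : Equiv.Perm (Fin (m + 1)) => a' (Fin.last m) = Fin.last m),
          ∑ c : Equiv.Perm (Fin (m + 1)),
            (((sign a' : ℤ) : ℂ) * ((sign c : ℤ) : ℂ)) • delta (RTtab s c a'))
        + (∑ a' ∈ Finset.univ.filter
            (fun a' : Equiv.Perm (Fin (m + 1)) => ¬ a' (Fin.last m) = Fin.last m),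
          ∑ c : Equiv.Perm (Fin (m + 1)),
            (((sign a' : ℤ) : ℂ) * ((sign c : ℤ) : ℂ)) • delta (RTtab s c a')) :=
      (Finset.sum_filter_add_sum_filter_not _ _ _).symm
    _ = (∑ a' ∈ Finset.univ.filter
            (fun a' : Equiv.Perm (Fin (m + 1)) => a' (Fin.last m) = Fin.last m),
          ∑ c : Equiv.Perm (Fin (m + 1)),
            (((sign a' : ℤ) : ℂ) * ((sign c : ℤ) : ℂ)) • delta (RTtab s c a')) + 0 := by
      congr 1
      refine Finset.sum_eq_zero fun a' ha' => ?_
      rw [Finset.mem_filter] at ha'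
      exact inner_zero a' ha'.2
    _ = ∑ a' ∈ Finset.univ.filter
            (fun a' : Equiv.Perm (Fin (m + 1)) => a' (Fin.last m) = Fin.last m),
          ∑ c : Equiv.Perm (Fin (m + 1)),
            (((sign a' : ℤ) : ℂ) * ((sign c : ℤ) : ℂ)) • delta (RTtab s c a') := add_zero _
    _ = ∑ b : Equiv.Perm (Fin m), ∑ c : Equiv.Perm (Fin (m + 1)),
            (((sign c : ℤ) : ℂ) * ((sign b : ℤ) : ℂ)) •
              delta (rowTabOf ((Equiv.sumCongr c b).trans u)) := by
      refine (Finset.sum_bij (fun (b : Equiv.Perm (Fin m)) _ => extP b) ?_ ?_ ?_ ?_).symm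
      · intro b _
        simp only [Finset.mem_filter, Finset.mem_univ, true_and]
        exact extP_last b
      · intro b _ b' _ h
        exact extP_injective h
      · intro a' ha'
        rw [Finset.mem_filter] at ha'
        have hlast := ha'.2
        have hne : ∀ j : Fin m, a' (Fin.castSucc j) ≠ Fin.last m := by
          intro j h
          have h2 := a'.injective (h.trans hlast.symm)
          have h3 := congrArg Fin.val h2
          simp only [Fin.coe_castSucc, Fin.val_last] at h3
          have := j.isLt
          omega
        have hbrinj : Function.Injective
            (fun j : Fin m => (a' (Fin.castSucc j)).castPred (hne j)) := by
          intro j j' h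
          have h2 := congrArg Fin.val h
          simp only [Fin.coe_castPred] at h2
          exact Fin.castSucc_injective m (a'.injective (Fin.ext h2))
        refine ⟨Equiv.ofBijective _ (Finite.injective_iff_bijective.mp hbrinj),
          Finset.mem_univ _, ?_⟩
        refine Equiv.ext fun k => ?_
        induction k using Fin.lastCases with
        | last => rw [extP_last, hlast]
        | cast j =>
            rw [extP_castSucc]
            apply Fin.ext
            simp [Fin.coe_castPred]
      · intro b _
        refine Finset.sum_congr rfl fun c _ => ?_
        rw [RTtab_ext hs1 hs2 hu c b, sign_extP]
        congr 1
        ring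
    _ = ∑ c : Equiv.Perm (Fin (m + 1)), ∑ b : Equiv.Perm (Fin m),
            (((sign c : ℤ) : ℂ) * ((sign b : ℤ) : ℂ)) •
              delta (rowTabOf ((Equiv.sumCongr c b).trans u)) := Finset.sum_comm
    _ = polytab u := (polytab_expand u).symm

/-- The image of the generalized Jacobi identity under the
polytabloid map holds in the Specht module `S^{(2^{n-1},1)}`: if `u` is the
bijective tableau of shape `(2^{n-1},1)` with first column `(x_1,…,x_n)` and
second column `(y_1,…,y_{n-1})`, and `s_i` is the tableau with first column
`(y_1,…,y_{n-1},x_i)` and second column `(x_1,…,x̂_i,…,x_n)`, then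
`ε_u = ∑_{i=1}^n (-1)^{n-i} ε_{s_i}`. -/
theorem jacobi_identity_in_specht (n : ℕ) (hn : 2 ≤ n)
    (x : Fin n → Fin (2 * n - 1)) (y : Fin (n - 1) → Fin (2 * n - 1))
    (hxy : Function.Bijective (Sum.elim x y))
    (u : Tabl (Fin (2 * n - 1)) n (n - 1))
    (hu : ∀ z, u z = Sum.elim x y z)
    (s : Fin n → Tabl (Fin (2 * n - 1)) n (n - 1))
    (hs1 : ∀ (i : Fin n) (j : Fin n),
      s i (Sum.inl j) = if h : (j : ℕ) < n - 1 then y ⟨(j : ℕ), h⟩ else x i)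
    (hs2 : ∀ (i : Fin n) (j : Fin (n - 1)),
      s i (Sum.inr j) =
        x ⟨if (j : ℕ) < (i : ℕ) then (j : ℕ) else (j : ℕ) + 1, by
          have hj := j.2; split <;> omega⟩) :
    polytab u = ∑ i : Fin n, (-1 : ℂ) ^ (n - 1 - (i : ℕ)) • polytab (s i) := by
  obtain ⟨m, rfl⟩ : ∃ m, n = m + 1 := ⟨n - 1, by omega⟩
  refine key_identity x y u hu s hs1 fun i j => ?_
  refine (hs2 i j).trans ?_
  congr 1
  apply Fin.ext
  simp only [Fin.succAbove, Fin.lt_def, Fin.coe_castSucc]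
  split_ifs <;> simp [Fin.val_succ]
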